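/- arXiv:math/0606319 — 3 statements merged into one kernel-verified Lean document; each statement's English description precedes it below -/
import Mathlib

section
/- Suppose F admits a tight completion by r vectors with squared norms a_1,...,a_r for some r < n (n = dim H). Then F does not admit a tight completion by k vectors with squared norms a_1,...,a_k for any k < n with k ≠ r. -/
open scoped BigOperators

noncomputable def frameOp {n p : ℕ} (f : Fin p → EuclideanSpace ℂ (Fin n)) :
    EuclideanSpace ℂ (Fin n) →L[ℂ] EuclideanSpace ℂ (Fin n) :=
  ∑ i, (innerSL ℂ (f i)).smulRight (f i)

def HasEigenvalues {n : ℕ} (S : EuclideanSpace ℂ (Fin n) →L[ℂ] EuclideanSpace ℂ (Fin n))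
    (Λ : Fin n → ℝ) : Prop :=
  Antitone Λ ∧ ∃ e : OrthonormalBasis (Fin n) ℂ (EuclideanSpace ℂ (Fin n)),
    ∀ i, S (e i) = (Λ i : ℂ) • e i

noncomputable def tailSum {n : ℕ} (hn : 0 < n) (Λ : Fin n → ℝ) (k : ℕ) : ℝ :=
  ∑ i ∈ Finset.range k, Λ ⟨n - 1 - i, by omega⟩

def Completable {n p : ℕ} (f : Fin p → EuclideanSpace ℂ (Fin n)) (a : ℕ → ℝ) (r : ℕ) : Prop :=
  ∃ (c : ℝ) (g : Fin r → EuclideanSpace ℂ (Fin n)), 0 < c ∧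
    (∀ i : Fin r, ‖g i‖ ^ 2 = a (i : ℕ)) ∧
    frameOp f + frameOp g = (c : ℂ) • ContinuousLinearMap.id ℂ (EuclideanSpace ℂ (Fin n))

noncomputable def cseq {n : ℕ} (hn : 0 < n) (Λ : Fin n → ℝ) (a : ℕ → ℝ) : ℕ → ℝ
  | 0 => Λ ⟨0, hn⟩
  | k + 1 => max (cseq hn Λ a k)
      ((1 / (k + 1 : ℝ)) * (∑ i ∈ Finset.range (k + 1), a i + tailSum hn Λ (k + 1)))

def IsBessel {n : ℕ} (g : ℕ → EuclideanSpace ℂ (Fin n)) : Prop :=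
  ∃ b > 0, ∀ x : EuclideanSpace ℂ (Fin n),
    Summable (fun i => ‖(inner ℂ (g i) x : ℂ)‖ ^ 2) ∧
    ∑' i, ‖(inner ℂ (g i) x : ℂ)‖ ^ 2 ≤ b * ‖x‖ ^ 2

def CompletableInf {n p : ℕ} (f : Fin p → EuclideanSpace ℂ (Fin n)) (a : ℕ → ℝ) : Prop :=
  ∃ (c : ℝ) (g : ℕ → EuclideanSpace ℂ (Fin n)), 0 < c ∧ IsBessel g ∧
    (∀ i, ‖g i‖ ^ 2 = a i) ∧
    ∀ x, frameOp f x + ∑' i, (inner ℂ (g i) x : ℂ) • g i = (c : ℂ) • x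

lemma frameOp_apply {n p : ℕ} (f : Fin p → EuclideanSpace ℂ (Fin n)) (x : EuclideanSpace ℂ (Fin n)) :
    frameOp f x = ∑ i, (inner ℂ (f i) x : ℂ) • f i := by
  simp [frameOp, ContinuousLinearMap.sum_apply]

lemma inner_frameOp {n p : ℕ} (f : Fin p → EuclideanSpace ℂ (Fin n)) (x : EuclideanSpace ℂ (Fin n)) :
    (inner ℂ x (frameOp f x) : ℂ) = ((∑ i, ‖(inner ℂ (f i) x : ℂ)‖ ^ 2 : ℝ) : ℂ) := by
  rw [frameOp_apply, inner_sum]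
  push_cast
  refine Finset.sum_congr rfl fun i _ => ?_
  rw [inner_smul_right, ← inner_conj_symm x (f i), mul_comm, Complex.conj_mul']

lemma trace_eq {n p r : ℕ} (f : Fin p → EuclideanSpace ℂ (Fin n))
    (g : Fin r → EuclideanSpace ℂ (Fin n)) (c : ℝ)
    (heq : frameOp f + frameOp g = (c : ℂ) • ContinuousLinearMap.id ℂ (EuclideanSpace ℂ (Fin n))) :
    (∑ j : Fin n, (inner ℂ (EuclideanSpace.single j (1:ℂ)) (frameOp f (EuclideanSpace.single j (1:ℂ))) : ℂ).re)
      + ∑ i, ‖g i‖ ^ 2 = n * c := by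
  set e : Fin n → EuclideanSpace ℂ (Fin n) := fun j => EuclideanSpace.single j (1:ℂ) with he
  have key : ∀ j, (inner ℂ (e j) (frameOp f (e j)) : ℂ).re
      + ∑ i, ‖(inner ℂ (g i) (e j) : ℂ)‖ ^ 2 = c := by
    intro j
    have h1 : frameOp f (e j) + frameOp g (e j) = (c : ℂ) • e j := by
      have := congrFun (congrArg DFunLike.coe heq) (e j)
      simpa using this
    have h2 : (inner ℂ (e j) (frameOp f (e j)) : ℂ) + inner ℂ (e j) (frameOp g (e j))
        = (c : ℂ) * inner ℂ (e j) (e j) := by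
      rw [← inner_add_right, h1, inner_smul_right]
    have hnorm : (inner ℂ (e j) (e j) : ℂ) = 1 := by
      rw [inner_self_eq_norm_sq_to_K]
      simp [he]
    rw [hnorm, mul_one, inner_frameOp g] at h2
    have := congrArg Complex.re h2
    simp only [Complex.add_re, Complex.ofReal_re] at this
    exact this
  have hsum := Finset.sum_congr rfl (fun j (_ : j ∈ Finset.univ) => key j)
  rw [Finset.sum_add_distrib] at hsum
  rw [Finset.sum_const, Finset.card_univ, Fintype.card_fin, nsmul_eq_mul] at hsum
  have hswap : ∑ j : Fin n, ∑ i, ‖(inner ℂ (g i) (e j) : ℂ)‖ ^ 2 = ∑ i, ‖g i‖ ^ 2 := by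
    rw [Finset.sum_comm]
    refine Finset.sum_congr rfl fun i _ => ?_
    have : ∀ j, ‖(inner ℂ (g i) (e j) : ℂ)‖ ^ 2 = ‖g i j‖ ^ 2 := by
      intro j
      rw [he]
      rw [EuclideanSpace.inner_single_right]
      simp
    simp_rw [this]
    rw [EuclideanSpace.norm_eq]
    rw [Real.sq_sqrt (by positivity)]
  rw [hswap] at hsum
  exact hsum
lemma exists_ker {n r : ℕ} (hr : r < n) (g : Fin r → EuclideanSpace ℂ (Fin n)) :
    ∃ x : EuclideanSpace ℂ (Fin n), x ≠ 0 ∧ frameOp g x = 0 := by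
  set L := (frameOp g).toLinearMap with hL
  have hrange : LinearMap.range L ≤ Submodule.span ℂ (Set.range g) := by
    rintro _ ⟨x, rfl⟩
    have : L x = ∑ i, (inner ℂ (g i) x : ℂ) • g i := frameOp_apply g x
    rw [this]
    exact Submodule.sum_mem _ fun i _ =>
      Submodule.smul_mem _ _ (Submodule.subset_span (Set.mem_range_self i))
  have h1 : Module.finrank ℂ (LinearMap.range L) ≤ r := by
    refine le_trans (Submodule.finrank_mono hrange) ?_
    simpa [Set.finrank] using finrank_range_le_card (R := ℂ) g
  have h2 : LinearMap.ker L ≠ ⊥ := by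
    intro hk
    have := LinearMap.finrank_range_add_finrank_ker L
    rw [hk, finrank_bot, add_zero, finrank_euclideanSpace_fin] at this
    omega
  obtain ⟨x, hx, hx0⟩ := Submodule.exists_mem_ne_zero_of_ne_bot h2
  exact ⟨x, hx0, hx⟩
lemma const_le {n p r k : ℕ} (hr : r < n)
    (f : Fin p → EuclideanSpace ℂ (Fin n))
    (g : Fin r → EuclideanSpace ℂ (Fin n)) (h : Fin k → EuclideanSpace ℂ (Fin n))
    (c c' : ℝ)
    (hg : frameOp f + frameOp g = (c : ℂ) • ContinuousLinearMap.id ℂ (EuclideanSpace ℂ (Fin n)))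
    (hh : frameOp f + frameOp h = (c' : ℂ) • ContinuousLinearMap.id ℂ (EuclideanSpace ℂ (Fin n))) :
    c ≤ c' := by
  obtain ⟨x, hx0, hxk⟩ := exists_ker hr g
  have hfx : frameOp f x = (c : ℂ) • x := by
    have := congrFun (congrArg DFunLike.coe hg) x
    simp only [ContinuousLinearMap.add_apply, ContinuousLinearMap.smul_apply,
      ContinuousLinearMap.id_apply] at this
    rw [hxk, add_zero] at this
    exact this
  have hhx : frameOp h x = ((c' : ℂ) - c) • x := by
    have := congrFun (congrArg DFunLike.coe hh) x
    simp only [ContinuousLinearMap.add_apply, ContinuousLinearMap.smul_apply,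
      ContinuousLinearMap.id_apply] at this
    rw [hfx] at this
    have h2 : frameOp h x = (c' : ℂ) • x - (c : ℂ) • x := by
      rw [← this]; abel
    rw [h2, ← sub_smul]
  have hinner : (inner ℂ x (frameOp h x) : ℂ) = ((c' : ℂ) - c) * (‖x‖ ^ 2 : ℝ) := by
    rw [hhx, inner_smul_right, inner_self_eq_norm_sq_to_K]
    norm_cast
    exact (Complex.ofReal_mul _ _).symm
  rw [inner_frameOp] at hinner
  have hre := congrArg Complex.re hinner
  simp only [Complex.ofReal_re, Complex.sub_re, Complex.mul_re, Complex.ofReal_im,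
    Complex.sub_im, Complex.zero_im, zero_mul, sub_zero] at hre
  have hnonneg : (0:ℝ) ≤ ∑ i, ‖(inner ℂ (h i) x : ℂ)‖ ^ 2 :=
    Finset.sum_nonneg fun i _ => by positivity
  have hxpos : (0:ℝ) < ‖x‖ ^ 2 := by
    have : (0:ℝ) < ‖x‖ := norm_pos_iff.mpr hx0
    positivity
  nlinarith [hre, hnonneg, hxpos]

lemma sum_range_lt (a : ℕ → ℝ) (hapos : ∀ i, 0 < a i) {k r : ℕ} (hkr : k < r) :
    ∑ i ∈ Finset.range k, a i < ∑ i ∈ Finset.range r, a i := by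
  refine Finset.sum_lt_sum_of_subset (Finset.range_subset_range.mpr hkr.le)
    (Finset.mem_range.mpr hkr) (by simp) (hapos k) (fun j _ _ => (hapos j).le)

theorem tight_completion_lt_dim_unique {n p : ℕ} (hn : 0 < n)
    (f : Fin p → EuclideanSpace ℂ (Fin n))
    (a : ℕ → ℝ) (ha : Antitone a) (hapos : ∀ i, 0 < a i)
    (r : ℕ) (hr : r < n) (hcomp : Completable f a r) :
    ∀ k, k < n → k ≠ r → ¬ Completable f a k := by
  intro k hk hkr hcomp'
  obtain ⟨c, g, hc, hga, hgeq⟩ := hcomp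
  obtain ⟨c', h, hc', hha, hheq⟩ := hcomp'
  have hcc : c = c' :=
    le_antisymm (const_le hr f g h c c' hgeq hheq) (const_le hk f h g c' c hheq hgeq)
  have t1 := trace_eq f g c hgeq
  have t2 := trace_eq f h c' hheq
  rw [hcc] at t1
  have hs1 : ∑ i : Fin r, ‖g i‖ ^ 2 = ∑ i ∈ Finset.range r, a i := by
    calc ∑ i : Fin r, ‖g i‖ ^ 2 = ∑ i : Fin r, a (i : ℕ) := Finset.sum_congr rfl fun i _ => hga i
    _ = ∑ i ∈ Finset.range r, a i := Fin.sum_univ_eq_sum_range (fun i => a i) r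
  have hs2 : ∑ i : Fin k, ‖h i‖ ^ 2 = ∑ i ∈ Finset.range k, a i := by
    calc ∑ i : Fin k, ‖h i‖ ^ 2 = ∑ i : Fin k, a (i : ℕ) := Finset.sum_congr rfl fun i _ => hha i
    _ = ∑ i ∈ Finset.range k, a i := Fin.sum_univ_eq_sum_range (fun i => a i) k
  have hsum : ∑ i ∈ Finset.range r, a i = ∑ i ∈ Finset.range k, a i := by
    rw [← hs1, ← hs2]; linarith
  rcases lt_or_gt_of_ne hkr with hlt | hgt
  · exact absurd hsum (ne_of_gt (sum_range_lt a hapos hlt))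
  · exact absurd hsum (ne_of_lt (sum_range_lt a hapos hgt))
end

section
/- If the series sum_{i=1}^∞ a_i diverges, then F is (a, r)-completable for some r ∈ ℕ. -/
open scoped BigOperators

lemma chord (b' W R : ℝ) (hb : 0 < b') (hW : 0 ≤ W) (hR : 0 ≤ R)
    (h1 : |W - b'| ≤ R) (h2 : R ≤ W + b') (w : ℂ) (habs : ‖w‖ = W) :
    ∃ ζ : ℂ, ‖ζ‖ = b' ∧ ‖w - ζ‖ = R := by
  rcases eq_or_lt_of_le hW with hW0 | hWpos
  · -- W = 0, so w = 0 and R = b'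
    have hw0 : w = 0 := by
      rw [← norm_eq_zero, habs, ← hW0]
    have hRb : R = b' := by
      rw [← hW0] at h1 h2
      simp at h1 h2
      rw [abs_of_nonneg hb.le] at h1
      linarith
    exact ⟨b', by simp [abs_of_nonneg hb.le], by simp [hw0, hRb, abs_of_nonneg hb.le]⟩
  · set x : ℝ := (W^2 + b'^2 - R^2)/(2*W*b') with hx
    have hden : (0:ℝ) < 2*W*b' := by positivity
    have hx1 : -1 ≤ x := by
      rw [hx, le_div_iff₀ hden]
      nlinarith [h2]
    have hx2 : x ≤ 1 := by
      rw [hx, div_le_iff₀ hden]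
      have := abs_le.mp h1
      nlinarith [this.1, this.2, sq_abs (W - b'), h1, hR, abs_nonneg (W-b')]
    have hxsq : 0 ≤ 1 - x^2 := by nlinarith
    set B : ℝ := b' * Real.sqrt (1 - x^2) with hB
    set A : ℝ := b' * x with hA
    have hWne : w ≠ 0 := by
      intro h; rw [h] at habs; simp at habs; linarith [habs, hWpos]
    have hWne' : (W:ℂ) ≠ 0 := by
      simp only [ne_eq, Complex.ofReal_eq_zero]; linarith
    set u : ℂ := w / (W:ℂ) with hu
    have huabs : ‖u‖ = 1 := by
      rw [hu, norm_div, habs, Complex.norm_real, Real.norm_eq_abs, abs_of_pos hWpos, div_self (by linarith)]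
    set ξ : ℂ := (A:ℂ) + (B:ℂ) * Complex.I with hξ
    refine ⟨ξ * u, ?_, ?_⟩
    · rw [norm_mul, huabs, mul_one, hξ, Complex.norm_add_mul_I]
      rw [hA, hB, mul_pow, mul_pow, Real.sq_sqrt hxsq]
      rw [show b'^2*x^2 + b'^2*(1-x^2) = b'^2 by ring, Real.sqrt_sq hb.le]
    · have hw : w = (W:ℂ) * u := by
        rw [hu, mul_div_cancel₀ _ hWne']
      rw [hw, show (W:ℂ) * u - ξ * u = ((W:ℂ) - ξ) * u by ring, norm_mul, huabs, mul_one]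
      rw [hξ, show (W:ℂ) - ((A:ℂ) + (B:ℂ)*Complex.I) = ((W - A : ℝ):ℂ) + ((-B : ℝ):ℂ) * Complex.I by
        push_cast; ring]
      rw [Complex.norm_add_mul_I]
      have : (W - A)^2 + (-B)^2 = R^2 := by
        rw [hA, hB]
        have hB2 : (-(b' * Real.sqrt (1-x^2)))^2 = b'^2 * (1 - x^2) := by
          rw [neg_pow, mul_pow, Real.sq_sqrt hxsq]; ring
        rw [hB2]
        have hxval : 2*W*b'*x = W^2 + b'^2 - R^2 := by
          rw [hx, mul_div_cancel₀ _ (ne_of_gt hden)]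
        nlinarith [hxval]
      rw [this, Real.sqrt_sq hR]

lemma polygon (b : ℕ → ℝ) (hb : Antitone b) (hpos : ∀ i, 0 < b i) (s : ℕ) :
    ∀ (d : ℕ) (w : ℂ), ‖w‖ ≤ ∑ i ∈ Finset.Ico s (s+d), b i →
    (∀ i ∈ Finset.Ico s (s+d), 2 * b i ≤ (∑ i ∈ Finset.Ico s (s+d), b i) + ‖w‖) →
    ∃ z : ℕ → ℂ, (∀ i ∈ Finset.Ico s (s+d), ‖z i‖ = b i) ∧
      ∑ i ∈ Finset.Ico s (s+d), z i = w := by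
  intro d
  induction d with
  | zero =>
    intro w hw _
    simp only [Nat.add_zero, Finset.Ico_self, Finset.sum_empty] at hw ⊢
    have : w = 0 := by
      rw [← norm_eq_zero]
      exact le_antisymm hw (norm_nonneg w)
    exact ⟨0, by simp, by simp [this]⟩
  | succ d IH =>
    intro w hw hw2
    have hsplit : ∑ i ∈ Finset.Ico s (s+(d+1)), b i
        = (∑ i ∈ Finset.Ico s (s+d), b i) + b (s+d) := by
      rw [show s+(d+1) = (s+d)+1 by ring, Finset.sum_Ico_succ_top (by omega)]
    have hmem : s + d ∈ Finset.Ico s (s + (d+1)) := by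
      simp [Finset.mem_Ico]
    rcases Nat.eq_zero_or_pos d with hd0 | hdpos
    · -- single element
      subst hd0
      have h2 := hw2 (s+0) (by simp)
      simp only [Nat.add_zero] at *
      rw [show s+1 = s+(0+1) by ring] at hw ⊢
      rw [hsplit] at hw h2
      simp only [Nat.add_zero, Finset.Ico_self, Finset.sum_empty, zero_add] at hw h2
      have habs : ‖w‖ = b s := le_antisymm hw (by linarith)
      refine ⟨fun i => if i = s then w else 0, ?_, ?_⟩
      · intro i hi
        simp only [Finset.mem_Ico] at hi
        have : i = s := by omega
        simp [this, habs]
      · rw [show s+(0+1) = s+1 by ring, Finset.sum_Ico_succ_top (by omega)]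
        simp
    · -- d ≥ 1
      set S' := ∑ i ∈ Finset.Ico s (s+d), b i with hS'
      set W := ‖w‖ with hWdef
      set b' := b (s+d) with hb'
      have hWnn : 0 ≤ W := norm_nonneg w
      have hb'pos : 0 < b' := hpos _
      have hbs_mem : s ∈ Finset.Ico s (s+d) := by simp only [Finset.mem_Ico]; omega
      have hbs_le_S' : b s ≤ S' := Finset.single_le_sum (fun i _ => (hpos i).le) hbs_mem
      have hb'_le_bs : b' ≤ b s := hb (by omega)
      have h2s := hw2 s (by simp only [Finset.mem_Ico]; omega)
      rw [hsplit] at hw h2s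
      set R := max (max (max 0 (2 * b s - S')) (W - b')) (b' - W) with hR
      have hR0 : 0 ≤ R := le_trans (le_max_left _ _) (le_trans (le_max_left _ _) (le_max_left _ _))
      have hRge1 : 2 * b s - S' ≤ R :=
        le_trans (le_max_right _ _) (le_trans (le_max_left _ _) (le_max_left _ _))
      have hRge2 : W - b' ≤ R := le_trans (le_max_right _ _) (le_max_left _ _)
      have hRge3 : b' - W ≤ R := le_max_right _ _
      have hRleS' : R ≤ S' := by
        rw [hR]
        simp only [max_le_iff]
        refine ⟨⟨⟨by linarith, by linarith⟩, by linarith⟩, by linarith⟩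
      have hRleWb : R ≤ W + b' := by
        rw [hR]
        simp only [max_le_iff]
        refine ⟨⟨⟨by linarith, by linarith⟩, by linarith⟩, by linarith⟩
      obtain ⟨ζ, hζ1, hζ2⟩ := chord b' W R hb'pos hWnn hR0 (abs_le.mpr ⟨by linarith, by linarith⟩)
        hRleWb w rfl
      obtain ⟨z', hz'1, hz'2⟩ := IH (w - ζ) (by rw [hζ2]; exact hRleS')
        (by
          intro i hi
          rw [hζ2]
          have : b i ≤ b s := hb (Finset.mem_Ico.mp hi).1
          linarith)
      refine ⟨fun i => if i = s + d then ζ else z' i, ?_, ?_⟩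
      · intro i hi
        simp only [Finset.mem_Ico] at hi
        by_cases hc : i = s + d
        · simp [hc, hζ1, ← hb']
        · simp only [hc, if_false]
          exact hz'1 i (by simp only [Finset.mem_Ico]; omega)
      · rw [show s+(d+1) = (s+d)+1 by ring, Finset.sum_Ico_succ_top (by omega)]
        simp only [if_pos rfl]
        have : ∑ i ∈ Finset.Ico s (s+d), (if i = s + d then ζ else z' i) =
            ∑ i ∈ Finset.Ico s (s+d), z' i := by
          apply Finset.sum_congr rfl
          intro i hi
          simp only [Finset.mem_Ico] at hi
          rw [if_neg (by omega)]
        rw [this, hz'2]; simp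

lemma blockLemma (b : ℕ → ℝ) (hb : Antitone b) (hpos : ∀ i, 0 < b i) (s m : ℕ)
    (x y : ℝ) (hx : 0 ≤ x) (hy : 0 ≤ y)
    (hsum : x + y = ∑ i ∈ Finset.Ico s m, b i)
    (hmax : ∀ i ∈ Finset.Ico s m, b i ≤ max x y) :
    ∃ p q : ℕ → ℂ,
      (∀ i ∈ Finset.Ico s m, ‖p i‖^2 + ‖q i‖^2 = b i) ∧
      (∑ i ∈ Finset.Ico s m, ‖p i‖^2 = x) ∧
      (∑ i ∈ Finset.Ico s m, ‖q i‖^2 = y) ∧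
      (∑ i ∈ Finset.Ico s m, p i * (starRingEnd ℂ) (q i) = 0) := by
  have hIco : Finset.Ico s m = Finset.Ico s (s + (m - s)) := by
    apply Finset.ext; intro i; simp only [Finset.mem_Ico]; omega
  rw [hIco] at hsum hmax ⊢
  set w : ℂ := ((x - y : ℝ) : ℂ) with hw
  have habsw : ‖w‖ = |x - y| := by rw [Complex.norm_real, Real.norm_eq_abs]
  obtain ⟨z, hz1, hz2⟩ := polygon b hb hpos s (m - s) w
    (by rw [habsw, ← hsum]; exact abs_le.mpr ⟨by linarith, by linarith⟩)
    (by
      intro i hi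
      rw [habsw, ← hsum]
      have h1 := hmax i hi
      rcases le_total x y with h | h
      · rw [max_eq_right h] at h1
        rw [abs_of_nonpos (by linarith)]; linarith
      · rw [max_eq_left h] at h1
        rw [abs_of_nonneg (by linarith)]; linarith)
  have hre_le : ∀ i ∈ Finset.Ico s (s + (m-s)), |(z i).re| ≤ b i := by
    intro i hi
    rw [← hz1 i hi]
    exact Complex.abs_re_le_norm _
  have him : ∀ i ∈ Finset.Ico s (s + (m-s)), (z i).re^2 + (z i).im^2 = (b i)^2 := by
    intro i hi
    rw [← hz1 i hi, Complex.sq_norm, Complex.normSq_apply]; ring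
  set P : ℕ → ℝ := fun i => Real.sqrt ((b i + (z i).re)/2) with hP
  set p : ℕ → ℂ := fun i => ((P i : ℝ) : ℂ) with hp
  set q : ℕ → ℂ := fun i => if (z i).re = -(b i) then ((Real.sqrt (b i) : ℝ) : ℂ)
    else Complex.I * (((z i).im / (2 * P i) : ℝ) : ℂ) with hq
  have hrenn : ∀ i ∈ Finset.Ico s (s + (m-s)), 0 ≤ (b i + (z i).re)/2 := by
    intro i hi
    have := abs_le.mp (hre_le i hi); linarith [this.1]
  have habsp : ∀ i ∈ Finset.Ico s (s + (m-s)), ‖p i‖^2 = (b i + (z i).re)/2 := by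
    intro i hi
    rw [hp]
    simp only [Complex.norm_real, Real.norm_eq_abs, sq_abs, hP]
    exact Real.sq_sqrt (hrenn i hi)
  have habsq : ∀ i ∈ Finset.Ico s (s + (m-s)), ‖q i‖^2 = (b i - (z i).re)/2 := by
    intro i hi
    simp only [hq]
    by_cases hc : (z i).re = -(b i)
    · rw [if_pos hc, Complex.norm_real, Real.norm_eq_abs, sq_abs, Real.sq_sqrt (hpos i).le, hc]; ring
    · rw [if_neg hc]
      simp only [norm_mul, Complex.norm_I, one_mul, Complex.norm_real, Real.norm_eq_abs, sq_abs, div_pow]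
      have hbre : 0 < b i + (z i).re := by
        have := abs_le.mp (hre_le i hi)
        rcases lt_or_eq_of_le this.1 with h | h
        · linarith
        · exact absurd h.symm hc
      have hP2 : P i ^ 2 = (b i + (z i).re)/2 := Real.sq_sqrt (by linarith)
      have h4 : (2 * P i)^2 = 2 * (b i + (z i).re) := by rw [mul_pow, hP2]; ring
      have him' := him i hi
      rw [h4, div_eq_div_iff (by linarith) (by norm_num : (2:ℝ) ≠ 0)]
      nlinarith [him']
  have hpq : ∀ i ∈ Finset.Ico s (s + (m-s)),
      p i * (starRingEnd ℂ) (q i) = -Complex.I * (((z i).im : ℝ) : ℂ) / 2 := by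
    intro i hi
    simp only [hp, hq]
    by_cases hc : (z i).re = -(b i)
    · rw [if_pos hc]
      have him' := him i hi
      have himz : (z i).im = 0 := by
        have h0 : (z i).im ^ 2 = 0 := by rw [hc] at him'; nlinarith [him']
        exact pow_eq_zero_iff (two_ne_zero) |>.mp h0
      have hPz : P i = 0 := by
        rw [hP]; simp only []
        rw [hc, show (b i + -(b i))/2 = 0 by ring, Real.sqrt_zero]
      rw [hPz, himz]
      simp
    · rw [if_neg hc]
      have hbre : 0 < b i + (z i).re := by
        have := abs_le.mp (hre_le i hi)
        rcases lt_or_eq_of_le this.1 with h | h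
        · linarith
        · exact absurd h.symm hc
      have hPpos : 0 < P i := Real.sqrt_pos.mpr (by linarith)
      rw [map_mul, Complex.conj_I, Complex.conj_ofReal]
      have : (P i : ℂ) * (-Complex.I * ((((z i).im / (2 * P i)) : ℝ) : ℂ))
          = -Complex.I * ((P i * ((z i).im / (2 * P i)) : ℝ) : ℂ) := by
        push_cast; ring
      rw [this]
      have h5 : P i * ((z i).im / (2 * P i)) = (z i).im / 2 := by
        field_simp
      rw [h5]
      push_cast; ring
  refine ⟨p, q, ?_, ?_, ?_, ?_⟩
  · intro i hi
    rw [habsp i hi, habsq i hi]; ring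
  · rw [Finset.sum_congr rfl habsp]
    have h6 : ∑ i ∈ Finset.Ico s (s + (m-s)), ((b i + (z i).re)/2)
        = ((∑ i ∈ Finset.Ico s (s + (m-s)), b i) + (∑ i ∈ Finset.Ico s (s + (m-s)), (z i).re))/2 := by
      rw [← Finset.sum_add_distrib, Finset.sum_div]
    have h7 : ∑ i ∈ Finset.Ico s (s + (m-s)), (z i).re = x - y := by
      rw [← Complex.re_sum, hz2, hw, Complex.ofReal_re]
    rw [h6, h7, ← hsum]; ring
  · rw [Finset.sum_congr rfl habsq]
    have h6 : ∑ i ∈ Finset.Ico s (s + (m-s)), ((b i - (z i).re)/2)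
        = ((∑ i ∈ Finset.Ico s (s + (m-s)), b i) - (∑ i ∈ Finset.Ico s (s + (m-s)), (z i).re))/2 := by
      rw [← Finset.sum_sub_distrib, Finset.sum_div]
    have h7 : ∑ i ∈ Finset.Ico s (s + (m-s)), (z i).re = x - y := by
      rw [← Complex.re_sum, hz2, hw, Complex.ofReal_re]
    rw [h6, h7, ← hsum]; ring
  · rw [Finset.sum_congr rfl hpq]
    have h8 : ∀ i ∈ Finset.Ico s (s + (m-s)),
        -Complex.I * (((z i).im : ℝ) : ℂ) / 2 = (-Complex.I/2) * (((z i).im : ℝ) : ℂ) := by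
      intro i _; ring
    rw [Finset.sum_congr rfl h8, ← Finset.mul_sum]
    have h9 : ∑ i ∈ Finset.Ico s (s + (m-s)), (((z i).im : ℝ) : ℂ)
        = (((∑ i ∈ Finset.Ico s (s + (m-s)), (z i).im : ℝ)) : ℂ) := by
      push_cast; rfl
    have h10 : ∑ i ∈ Finset.Ico s (s + (m-s)), (z i).im = 0 := by
      rw [← Complex.im_sum, hz2, hw, Complex.ofReal_im]
    rw [h9, h10]
    simp

lemma lemmaD (b : ℕ → ℝ) (hb : Antitone b) (hpos : ∀ i, 0 < b i) :
    ∀ (n : ℕ) (s r : ℕ) (t : Fin (n+1) → ℝ),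
    (∑ i ∈ Finset.Ico s r, b i) = (∑ k, t k) →
    (0 < n → b s ≤ t 0) →
    (∀ k : Fin (n+1), 0 < (k:ℕ) → (k:ℕ) < n → 2 * b s ≤ t k) →
    (0 < n → 0 ≤ t (Fin.last n)) →
    ∃ v : ℕ → Fin (n+1) → ℂ,
      (∀ i ∈ Finset.Ico s r, ∑ k, ‖v i k‖^2 = b i) ∧
      (∀ k l : Fin (n+1), ∑ i ∈ Finset.Ico s r, v i k * (starRingEnd ℂ) (v i l)
          = if k = l then ((t k : ℝ):ℂ) else 0) := by
  intro n
  induction n with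
  | zero =>
    intro s r t hsum _ _ _
    refine ⟨fun i _ => ((Real.sqrt (b i) : ℝ) : ℂ), ?_, ?_⟩
    · intro i hi
      rw [Fin.sum_univ_one]
      simp only [Complex.norm_real, Real.norm_eq_abs, sq_abs]
      exact Real.sq_sqrt (hpos i).le
    · intro k l
      have hkl : k = l := by
        apply Fin.ext; have := k.isLt; have := l.isLt; omega
      subst hkl
      rw [if_pos rfl]
      have hterm : ∀ i ∈ Finset.Ico s r,
          ((Real.sqrt (b i) : ℝ) : ℂ) * (starRingEnd ℂ) ((Real.sqrt (b i) : ℝ) : ℂ)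
          = ((b i : ℝ) : ℂ) := by
        intro i _
        rw [Complex.conj_ofReal, ← Complex.ofReal_mul, Real.mul_self_sqrt (hpos i).le]
      rw [Finset.sum_congr rfl hterm]
      have : k = 0 := by
        apply Fin.ext; have := k.isLt; omega
      subst this
      rw [← Complex.ofReal_sum, hsum, Fin.sum_univ_one]
  | succ n IH =>
    intro s r t hsum h4 h5 h6
    have hbs : 0 < b s := hpos s
    have ht0 : b s ≤ t 0 := h4 (Nat.succ_pos n)
    have ht0pos : 0 < t 0 := lt_of_lt_of_le hbs ht0
    have htail : 0 ≤ ∑ k : Fin (n+1), t k.succ := by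
      apply Finset.sum_nonneg
      intro k _
      rcases lt_or_eq_of_le (Nat.lt_succ_iff.mp k.isLt) with hk | hk
      · have := h5 k.succ (by simp [Fin.val_succ]) (by simp [Fin.val_succ]; omega)
        linarith
      · have hlast : k.succ = Fin.last (n+1) := by
          apply Fin.ext; simp [Fin.val_succ, hk]
        rw [hlast]
        exact h6 (Nat.succ_pos n)
    have hsum' : ∑ i ∈ Finset.Ico s r, b i = t 0 + ∑ k : Fin (n+1), t k.succ := by
      rw [hsum, Fin.sum_univ_succ]
    have hexists : ∃ m, t 0 ≤ ∑ i ∈ Finset.Ico s m, b i :=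
      ⟨r, by rw [hsum']; linarith⟩
    set β := Nat.find hexists with hβdef
    have hβ : t 0 ≤ ∑ i ∈ Finset.Ico s β, b i := Nat.find_spec hexists
    have hβler : β ≤ r := Nat.find_min' hexists (by rw [hsum']; linarith)
    have hsltβ : s < β := by
      by_contra h
      push_neg at h
      have : Finset.Ico s β = ∅ := Finset.Ico_eq_empty (by omega)
      rw [this] at hβ
      simp at hβ
      linarith
    set y := (∑ i ∈ Finset.Ico s β, b i) - t 0 with hydef
    have hy0 : 0 ≤ y := by rw [hydef]; linarith
    have hylt : y ≤ b s := by
      have hmin : ¬ (t 0 ≤ ∑ i ∈ Finset.Ico s (β-1), b i) :=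
        Nat.find_min hexists (by omega)
      push_neg at hmin
      have hsp : ∑ i ∈ Finset.Ico s β, b i
          = (∑ i ∈ Finset.Ico s (β-1), b i) + b (β-1) := by
        conv_lhs => rw [show β = (β-1)+1 by omega]
        rw [Finset.sum_Ico_succ_top (by omega)]
      have : b (β-1) ≤ b s := hb (by omega)
      rw [hydef, hsp]
      linarith
    obtain ⟨p, q, hpq1, hpq2, hpq3, hpq4⟩ := blockLemma b hb hpos s β (t 0) y ht0pos.le hy0
      (by rw [hydef]; ring)
      (by
        intro i hi
        have : b i ≤ b s := hb (Finset.mem_Ico.mp hi).1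
        calc b i ≤ t 0 := le_trans this ht0
        _ ≤ max (t 0) y := le_max_left _ _)
    set t' : Fin (n+1) → ℝ := fun k => t k.succ - (if k = 0 then y else 0) with ht'def
    have hsum'' : ∑ i ∈ Finset.Ico β r, b i = ∑ k, t' k := by
      have hcons : ∑ i ∈ Finset.Ico s β, b i + ∑ i ∈ Finset.Ico β r, b i
          = ∑ i ∈ Finset.Ico s r, b i := Finset.sum_Ico_consecutive _ hsltβ.le hβler
      have hsum3 : ∑ k, t' k = (∑ k : Fin (n+1), t k.succ) - y := by
        rw [ht'def]
        rw [Finset.sum_sub_distrib]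
        congr 1
        rw [Finset.sum_ite_eq' Finset.univ (0 : Fin (n+1)) (fun _ => y)]
        simp
      rw [hsum3]
      have : ∑ i ∈ Finset.Ico β r, b i = (∑ i ∈ Finset.Ico s r, b i) - (∑ i ∈ Finset.Ico s β, b i) := by
        linarith
      rw [this, hsum', hydef]
      ring
    have hbβ : b β ≤ b s := hb hsltβ.le
    obtain ⟨w, hw1, hw2⟩ := IH β r t' hsum''
      (by
        intro hn
        have h1 : 2 * b s ≤ t 1 := by
          have := h5 1 (by simp) (by simp; omega)
          exact this
        have h0 : t' 0 = t 1 - y := by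
          rw [ht'def]; simp
        rw [h0]
        linarith
      )
      (by
        intro k hk1 hk2
        have hksucc : t' k = t k.succ := by
          rw [ht'def]
          simp only []
          rw [if_neg (by intro h; rw [h] at hk1; simp at hk1), sub_zero]
        rw [hksucc]
        have := h5 k.succ (by simp [Fin.val_succ]) (by simp [Fin.val_succ]; omega)
        linarith
      )
      (by
        intro hn
        have hne : (Fin.last n : Fin (n+1)) ≠ 0 := by
          intro h
          have := congrArg Fin.val h
          simp [Fin.val_last] at this
          omega
        have : t' (Fin.last n) = t (Fin.last n).succ := by
          rw [ht'def]; simp only [if_neg hne, sub_zero]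
        rw [this]
        have hlast : (Fin.last n).succ = Fin.last (n+1) := by
          apply Fin.ext; simp
        rw [hlast]
        exact h6 (Nat.succ_pos n))
    -- assemble
    set v : ℕ → Fin (n+2) → ℂ := fun i =>
      if i < β then Fin.cons (p i) (Fin.cons (q i) (0 : Fin n → ℂ)) else Fin.cons 0 (w i)
      with hvdef
    have hvlt : ∀ i ∈ Finset.Ico s β, v i = Fin.cons (p i) (Fin.cons (q i) (0 : Fin n → ℂ)) := by
      intro i hi
      rw [hvdef]
      simp only [if_pos (Finset.mem_Ico.mp hi).2]
    have hvge : ∀ i ∈ Finset.Ico β r, v i = Fin.cons 0 (w i) := by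
      intro i hi
      rw [hvdef]
      simp only [if_neg (by have := (Finset.mem_Ico.mp hi).1; omega : ¬ i < β)]
    have hsplit : ∀ F : ℕ → ℂ, ∑ i ∈ Finset.Ico s r, F i
        = ∑ i ∈ Finset.Ico s β, F i + ∑ i ∈ Finset.Ico β r, F i :=
      fun F => (Finset.sum_Ico_consecutive F hsltβ.le hβler).symm
    refine ⟨v, ?_, ?_⟩
    · intro i hi
      rcases Nat.lt_or_ge i β with hc | hc
      · have hv := hvlt i (Finset.mem_Ico.mpr ⟨(Finset.mem_Ico.mp hi).1, hc⟩)
        rw [hv, Fin.sum_univ_succ, Fin.sum_univ_succ]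
        simp only [Fin.cons_zero, Fin.cons_succ, Pi.zero_apply, map_zero]
        simpa using hpq1 i (Finset.mem_Ico.mpr ⟨(Finset.mem_Ico.mp hi).1, hc⟩)
      · have hv := hvge i (Finset.mem_Ico.mpr ⟨hc, (Finset.mem_Ico.mp hi).2⟩)
        rw [hv, Fin.sum_univ_succ]
        simp only [Fin.cons_zero, Fin.cons_succ, map_zero]
        simpa using hw1 i (Finset.mem_Ico.mpr ⟨hc, (Finset.mem_Ico.mp hi).2⟩)
    · intro k l
      rw [hsplit]
      have e1 : ∑ i ∈ Finset.Ico s β, v i k * (starRingEnd ℂ) (v i l)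
          = ∑ i ∈ Finset.Ico s β,
            ((Fin.cons (p i) (Fin.cons (q i) (0:Fin n → ℂ)) : Fin (n+2) → ℂ) k
              * (starRingEnd ℂ) ((Fin.cons (p i) (Fin.cons (q i) (0:Fin n → ℂ)) : Fin (n+2) → ℂ) l)) := by
        apply Finset.sum_congr rfl
        intro i hi
        rw [hvlt i hi]
      have e2 : ∑ i ∈ Finset.Ico β r, v i k * (starRingEnd ℂ) (v i l)
          = ∑ i ∈ Finset.Ico β r,
            ((Fin.cons (0:ℂ) (w i) : Fin (n+2) → ℂ) k * (starRingEnd ℂ) ((Fin.cons (0:ℂ) (w i) : Fin (n+2) → ℂ) l)) := by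
        apply Finset.sum_congr rfl
        intro i hi
        rw [hvge i hi]
      rw [e1, e2]
      have hsumP : ∑ i ∈ Finset.Ico s β, p i * (starRingEnd ℂ) (p i) = ((t 0 : ℝ) : ℂ) := by
        have hterm : ∀ i ∈ Finset.Ico s β, p i * (starRingEnd ℂ) (p i)
            = ((‖p i‖^2 : ℝ) : ℂ) := by
          intro i _
          rw [Complex.mul_conj, Complex.sq_norm]
        rw [Finset.sum_congr rfl hterm, ← Complex.ofReal_sum, hpq2]
      have hsumQ : ∑ i ∈ Finset.Ico s β, q i * (starRingEnd ℂ) (q i) = ((y : ℝ) : ℂ) := by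
        have hterm : ∀ i ∈ Finset.Ico s β, q i * (starRingEnd ℂ) (q i)
            = ((‖q i‖^2 : ℝ) : ℂ) := by
          intro i _
          rw [Complex.mul_conj, Complex.sq_norm]
        rw [Finset.sum_congr rfl hterm, ← Complex.ofReal_sum, hpq3]
      have hsumQP : ∑ i ∈ Finset.Ico s β, q i * (starRingEnd ℂ) (p i) = 0 := by
        have : ∑ i ∈ Finset.Ico s β, q i * (starRingEnd ℂ) (p i)
            = (starRingEnd ℂ) (∑ i ∈ Finset.Ico s β, p i * (starRingEnd ℂ) (q i)) := by
          rw [map_sum]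
          apply Finset.sum_congr rfl
          intro i _
          rw [map_mul, Complex.conj_conj]
          ring
        rw [this, hpq4, map_zero]
      cases k using Fin.cases with
      | zero =>
        cases l using Fin.cases with
        | zero =>
          simp only [Fin.cons_zero, if_pos rfl]
          rw [hsumP]
          simp
        | succ j =>
          rw [if_neg (Ne.symm (Fin.succ_ne_zero j))]
          simp only [Fin.cons_zero, Fin.cons_succ]
          have h2 : ∑ i ∈ Finset.Ico β r, (0:ℂ) * (starRingEnd ℂ) (w i j) = 0 := by simp
          rw [h2, add_zero]
          cases j using Fin.cases with
          | zero =>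
            simpa using hpq4
          | succ j' =>
            simp
      | succ j =>
        cases l using Fin.cases with
        | zero =>
          rw [if_neg (Fin.succ_ne_zero j)]
          simp only [Fin.cons_zero, Fin.cons_succ]
          have h2 : ∑ i ∈ Finset.Ico β r, w i j * (starRingEnd ℂ) (0:ℂ) = 0 := by simp
          rw [h2, add_zero]
          cases j using Fin.cases with
          | zero =>
            simpa using hsumQP
          | succ j' =>
            simp
        | succ j' =>
          simp only [Fin.cons_succ]
          rw [hw2 j j']
          have hiff : (j.succ = j'.succ) = (j = j') := by
            simp [Fin.succ_inj]
          cases j using Fin.cases with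
          | zero =>
            cases j' using Fin.cases with
            | zero =>
              rw [if_pos rfl, if_pos rfl]
              simp only [Fin.cons_zero]
              rw [hsumQ]
              have ht'0 : t' 0 = t 1 - y := by rw [ht'def]; simp
              rw [ht'0]
              have h1 : ((0:Fin (n+1)).succ : Fin (n+2)) = 1 := rfl
              rw [h1]
              push_cast
              ring
            | succ j'' =>
              rw [if_neg (show ¬((0:Fin (n+1)).succ = (Fin.succ j'').succ) from
                  fun h => (Fin.succ_ne_zero j'') (Fin.succ_inj.mp h).symm),
                if_neg (show ¬((0:Fin (n+1)) = Fin.succ j'') from Ne.symm (Fin.succ_ne_zero j''))]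
              simp [Fin.cons_zero, Fin.cons_succ]
          | succ j'' =>
            cases j' using Fin.cases with
            | zero =>
              rw [if_neg (show ¬((Fin.succ j'').succ = (0:Fin (n+1)).succ) from
                  fun h => (Fin.succ_ne_zero j'') (Fin.succ_inj.mp h)),
                if_neg (show ¬(Fin.succ j'' = (0:Fin (n+1))) from Fin.succ_ne_zero j'')]
              simp [Fin.cons_zero, Fin.cons_succ]
            | succ j''' =>
              have hz : ∑ i ∈ Finset.Ico s β,
                  ((0:ℂ) * (starRingEnd ℂ) ((Fin.cons (q i) (0:Fin n → ℂ) : Fin (n+1) → ℂ) j'''.succ)) = 0 := by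
                simp
              simp only [Fin.cons_succ]
              rw [Finset.sum_congr rfl (fun i _ => by rw [Pi.zero_apply, zero_mul]),
                Finset.sum_const_zero, zero_add]
              by_cases h : j''.succ = j'''.succ
              · rw [if_pos h, if_pos (by rw [h])]
                have : t' j''.succ = t (j''.succ).succ := by
                  rw [ht'def]
                  simp only [if_neg (Fin.succ_ne_zero j''), sub_zero]
                rw [this, h]
              · rw [if_neg h, if_neg (by intro hh; exact h (Fin.succ_inj.mp hh))]

theorem divergent_implies_completable {n p : ℕ} (hn : 0 < n)
    (f : Fin p → EuclideanSpace ℂ (Fin n))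
    (a : ℕ → ℝ) (ha : Antitone a) (hapos : ∀ i, 0 < a i)
    (hdiv : ¬ Summable a) :
    ∃ r : ℕ, Completable f a r := by
  obtain ⟨n₀, rfl⟩ : ∃ m, n = m + 1 := ⟨n - 1, by omega⟩
  have hS_apply : ∀ (m : ℕ) (u : Fin m → EuclideanSpace ℂ (Fin (n₀+1))) (x : EuclideanSpace ℂ (Fin (n₀+1))),
      frameOp u x = ∑ i, (inner ℂ (u i) x : ℂ) • u i := by
    intro m u x
    simp only [frameOp, ContinuousLinearMap.sum_apply, ContinuousLinearMap.smulRight_apply,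
      innerSL_apply_apply]
  have hsym : LinearMap.IsSymmetric ((frameOp f : EuclideanSpace ℂ (Fin (n₀+1)) →L[ℂ] EuclideanSpace ℂ (Fin (n₀+1))) : EuclideanSpace ℂ (Fin (n₀+1)) →ₗ[ℂ] EuclideanSpace ℂ (Fin (n₀+1))) := by
    intro x y
    simp only [ContinuousLinearMap.coe_coe]
    rw [hS_apply _ f, hS_apply _ f, sum_inner, inner_sum]
    apply Finset.sum_congr rfl
    intro i _
    rw [inner_smul_left, inner_smul_right, ← inner_conj_symm x (f i)]
    ring
  set e := hsym.eigenvectorBasis finrank_euclideanSpace_fin with he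
  set Λ : Fin (n₀+1) → ℝ := hsym.eigenvalues finrank_euclideanSpace_fin with hΛ
  have heig : ∀ k, frameOp f (e k) = ((Λ k : ℝ) : ℂ) • e k := by
    intro k
    have := hsym.apply_eigenvectorBasis finrank_euclideanSpace_fin k
    exact this
  have hΛnn : ∀ k, 0 ≤ Λ k := by
    intro k
    have h1 : (inner ℂ (e k) (frameOp f (e k)) : ℂ) = ((Λ k : ℝ) : ℂ) := by
      rw [heig k, inner_smul_right, inner_self_eq_norm_sq_to_K]
      have : ‖e k‖ = 1 := e.orthonormal.1 k
      rw [this]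
      norm_num
    have h2 : (inner ℂ (e k) (frameOp f (e k)) : ℂ)
        = ((∑ i, Complex.normSq (inner ℂ (f i) (e k) : ℂ) : ℝ) : ℂ) := by
      rw [hS_apply _ f, inner_sum]
      rw [Complex.ofReal_sum]
      apply Finset.sum_congr rfl
      intro i _
      rw [inner_smul_right, ← inner_conj_symm (f i) (e k), ← Complex.normSq_eq_conj_mul_self,
        Complex.normSq_conj]
    rw [h2] at h1
    have h3 : ∑ i, Complex.normSq (inner ℂ (f i) (e k) : ℂ) = Λ k :=
      Complex.ofReal_injective h1
    rw [← h3]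
    apply Finset.sum_nonneg
    intro i _
    exact Complex.normSq_nonneg _
  set Tr : ℝ := ∑ k, Λ k with hTr
  have hTrnn : 0 ≤ Tr := Finset.sum_nonneg fun k _ => hΛnn k
  have hΛleTr : ∀ k, Λ k ≤ Tr := by
    intro k
    rw [hTr]
    exact Finset.single_le_sum (fun j _ => hΛnn j) (Finset.mem_univ k)
  -- choose r
  have htend := (not_summable_iff_tendsto_nat_atTop_of_nonneg (fun i => (hapos i).le)).mp hdiv
  obtain ⟨r, hr⟩ := (htend.eventually_ge_atTop ((n₀+1) * (2 * a 0) + (n₀+1) * Tr)).exists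
  set c : ℝ := ((∑ i ∈ Finset.range r, a i) + Tr) / (n₀ + 1) with hc
  have hcTr : 2 * a 0 ≤ c - Tr := by
    rw [hc, le_sub_iff_add_le, le_div_iff₀ (by positivity)]
    push_cast at hr ⊢
    nlinarith [hr, hTrnn]
  set t : Fin (n₀+1) → ℝ := fun k => c - Λ k with ht
  have htge : ∀ k, 2 * a 0 ≤ t k := by
    intro k
    have := hΛleTr k
    show 2 * a 0 ≤ c - Λ k
    linarith
  obtain ⟨v, hv1, hv2⟩ := lemmaD a ha hapos n₀ 0 r t
    (by
      rw [← Finset.range_eq_Ico]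
      rw [ht]
      rw [Finset.sum_sub_distrib, Finset.sum_const, Finset.card_univ]
      simp only [Fintype.card_fin, nsmul_eq_mul]
      rw [hc]
      push_cast
      field_simp
      linarith [hTr])
    (fun _ => by linarith [htge 0, hapos 0])
    (fun k _ _ => htge k)
    (fun _ => by linarith [htge (Fin.last n₀), hapos 0])
  set g : Fin r → EuclideanSpace ℂ (Fin (n₀+1)) := fun i => ∑ k, v i.val k • e k with hg
  have hginner : ∀ (i : Fin r) (l : Fin (n₀+1)), (inner ℂ (g i) (e l) : ℂ)
      = (starRingEnd ℂ) (v i.val l) := by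
    intro i l
    rw [hg]
    exact e.orthonormal.inner_left_fintype _ l
  refine ⟨r, c, g, ?_, ?_, ?_⟩
  · linarith [hcTr, hTrnn, hapos 0]
  · intro i
    have h1 : (inner ℂ (g i) (g i) : ℂ) = ∑ k, (starRingEnd ℂ) (v i.val k) * v i.val k := by
      rw [hg]
      exact e.orthonormal.inner_sum _ _ _
    have h2 : ∑ k, (starRingEnd ℂ) (v i.val k) * v i.val k
        = ((∑ k, ‖v i.val k‖^2 : ℝ) : ℂ) := by
      rw [Complex.ofReal_sum]
      apply Finset.sum_congr rfl
      intro k _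
      rw [Complex.sq_norm, ← Complex.normSq_eq_conj_mul_self]
    have h3 : ∑ k, ‖v i.val k‖^2 = a i.val :=
      hv1 i.val (by rw [← Finset.range_eq_Ico]; exact Finset.mem_range.mpr i.isLt)
    rw [h2, h3] at h1
    rw [inner_self_eq_norm_sq_to_K] at h1
    have := Complex.ofReal_injective (by push_cast at h1 ⊢; exact h1 :
      ((‖g i‖^2 : ℝ):ℂ) = ((a i.val : ℝ):ℂ))
    exact this
  · apply ContinuousLinearMap.coe_injective
    apply Module.Basis.ext e.toBasis
    intro l
    simp only [OrthonormalBasis.coe_toBasis, ContinuousLinearMap.coe_coe,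
      ContinuousLinearMap.add_apply, ContinuousLinearMap.smul_apply,
      ContinuousLinearMap.id_apply]
    have hfg : frameOp g (e l) = ((t l : ℝ) : ℂ) • e l := by
      rw [hS_apply _ g]
      have h1 : ∀ i : Fin r, (inner ℂ (g i) (e l) : ℂ) • g i
          = ∑ k, ((v i.val k * (starRingEnd ℂ) (v i.val l)) • e k) := by
        intro i
        rw [hginner, hg, Finset.smul_sum]
        apply Finset.sum_congr rfl
        intro k _
        rw [smul_smul, mul_comm]
      rw [Finset.sum_congr rfl (fun i _ => h1 i)]
      rw [Finset.sum_comm]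
      have h2 : ∀ k, ∑ i : Fin r, (v i.val k * (starRingEnd ℂ) (v i.val l)) • e k
          = (if k = l then ((t k : ℝ):ℂ) else 0) • e k := by
        intro k
        rw [← Finset.sum_smul]
        congr 1
        rw [← hv2 k l]
        rw [← Finset.range_eq_Ico, Finset.sum_range]
      rw [Finset.sum_congr rfl (fun k _ => h2 k)]
      rw [Finset.sum_eq_single l]
      · rw [if_pos rfl]
      · intro k _ hk
        rw [if_neg hk, zero_smul]
      · intro h
        exact absurd (Finset.mem_univ l) h
    rw [hfg, heig l]
    rw [← add_smul]
    congr 1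
    rw [ht]
    push_cast
    ring
end

section
/- If λ_1 − λ_2 ≥ n/(n−1), then h = sum_{i=2}^n (λ_1 − λ_i) ≥ n, and consequently F cannot be completed to a tight frame by fewer than n unit-norm vectors. -/
open scoped BigOperators

lemma inner_frameOp_self {n p : ℕ} (f : Fin p → EuclideanSpace ℂ (Fin n))
    (x : EuclideanSpace ℂ (Fin n)) :
    (inner ℂ x (frameOp f x) : ℂ) = ∑ i, (‖(inner ℂ (f i) x : ℂ)‖ : ℂ) ^ 2 := by
  rw [frameOp_apply, inner_sum]
  congr 1
  ext i
  rw [inner_smul_right]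
  rw [← inner_conj_symm x (f i), Complex.mul_conj']

lemma parseval {n : ℕ} (e : OrthonormalBasis (Fin n) ℂ (EuclideanSpace ℂ (Fin n)))
    (g : EuclideanSpace ℂ (Fin n)) :
    ∑ i, ‖(inner ℂ g (e i) : ℂ)‖ ^ 2 = ‖g‖ ^ 2 := by
  have h := e.sum_inner_mul_inner g g
  have h2 : ∀ i : Fin n, (inner ℂ g (e i) : ℂ) * inner ℂ (e i) g
      = (‖(inner ℂ g (e i) : ℂ)‖ : ℂ) ^ 2 := fun i => by
    rw [← inner_conj_symm g (e i), RCLike.conj_mul, RCLike.norm_conj]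
    norm_num
  rw [Finset.sum_congr rfl (fun i _ => h2 i), inner_self_eq_norm_sq_to_K] at h
  simpa [← Complex.ofReal_pow] using congrArg Complex.re h

lemma aux_sum {n : ℕ} (hn : 2 ≤ n) (Λ : Fin n → ℝ) (hmono : Antitone Λ)
    (hgap : (n : ℝ) / (n - 1) ≤ Λ ⟨0, Nat.lt_of_lt_of_le Nat.two_pos hn⟩ - Λ ⟨1, Nat.lt_of_lt_of_le Nat.one_lt_two hn⟩) (μ : ℝ)
    (hμ : Λ ⟨0, Nat.lt_of_lt_of_le Nat.two_pos hn⟩ ≤ μ) :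
    (n : ℝ) ≤ ∑ i, (μ - Λ i) := by
  set z : Fin n := ⟨0, by omega⟩ with hz
  have hmem : z ∈ (Finset.univ : Finset (Fin n)) := Finset.mem_univ z
  have hcard : ((Finset.univ : Finset (Fin n)).erase z).card = n - 1 := by
    simp [Finset.card_erase_of_mem hmem]
  have hub : ∀ i ∈ (Finset.univ : Finset (Fin n)).erase z,
      (n : ℝ) / (n - 1) ≤ μ - Λ i := by
    intro i hi
    have hiz : i ≠ z := (Finset.mem_erase.mp hi).1
    have h1 : (⟨1, by omega⟩ : Fin n) ≤ i := by
      rw [Fin.le_def]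
      have hv : (i : ℕ) ≠ 0 := fun h => hiz (Fin.ext h)
      show 1 ≤ (i : ℕ)
      omega
    have := hmono h1
    linarith
  have hsum := Finset.sum_le_sum hub
  rw [Finset.sum_const, hcard, nsmul_eq_mul] at hsum
  have h2 : (2 : ℝ) ≤ n := by exact_mod_cast hn
  have hcast : ((n - 1 : ℕ) : ℝ) * ((n : ℝ) / ((n : ℝ) - 1)) = n := by
    have hne : (n : ℝ) - 1 ≠ 0 := by linarith
    rw [Nat.cast_sub (by omega)]
    push_cast
    rw [mul_comm, div_mul_cancel₀ _ hne]
  rw [hcast] at hsum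
  have hsplit := Finset.add_sum_erase (Finset.univ : Finset (Fin n))
    (fun i => μ - Λ i) hmem
  have hz0 : 0 ≤ μ - Λ z := by linarith
  linarith [hsplit]

theorem gap_implies_many_vectors_needed {n p : ℕ} (hn : 2 ≤ n)
    (f : Fin p → EuclideanSpace ℂ (Fin n)) (Λ : Fin n → ℝ)
    (hΛ : HasEigenvalues (frameOp f) Λ)
    (hgap : (n : ℝ) / (n - 1) ≤ Λ ⟨0, by omega⟩ - Λ ⟨1, by omega⟩) :
    (n : ℝ) ≤ ∑ i, (Λ ⟨0, by omega⟩ - Λ i) ∧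
    ∀ r, r < n → ¬ Completable f (fun _ => (1 : ℝ)) r := by
  obtain ⟨hmono, e, he⟩ := hΛ
  constructor
  · exact aux_sum hn Λ hmono hgap _ le_rfl
  · rintro r hr ⟨c, g, hc, hnorm, heq⟩
    -- key : for each i, c - Λ i = ∑ j, ‖⟪g j, e i⟫‖²
    have key : ∀ i : Fin n, c - Λ i = ∑ j, ‖(inner ℂ (g j) (e i) : ℂ)‖ ^ 2 := by
      intro i
      have happ := congrFun (congrArg DFunLike.coe heq) (e i)
      simp only [ContinuousLinearMap.add_apply, ContinuousLinearMap.smul_apply,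
        ContinuousLinearMap.id_apply, he i] at happ
      have hg : frameOp g (e i) = ((c : ℂ) - (Λ i : ℂ)) • e i := by
        rw [sub_smul]
        rw [← happ]
        abel
      have hinner : (inner ℂ (e i) (frameOp g (e i)) : ℂ) = (c : ℂ) - (Λ i : ℂ) := by
        rw [hg, inner_smul_right, inner_self_eq_norm_sq_to_K, e.orthonormal.1 i]
        norm_num
      rw [inner_frameOp_self] at hinner
      symm
      simpa [← Complex.ofReal_pow] using congrArg Complex.re hinner
    have hnonneg : ∀ i : Fin n, 0 ≤ c - Λ i := by
      intro i
      rw [key i]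
      exact Finset.sum_nonneg fun j _ => by positivity
    have htrace : ∑ i : Fin n, (c - Λ i) = r := by
      calc ∑ i : Fin n, (c - Λ i)
          = ∑ i : Fin n, ∑ j : Fin r, ‖(inner ℂ (g j) (e i) : ℂ)‖ ^ 2 := by
            exact Finset.sum_congr rfl fun i _ => key i
        _ = ∑ j : Fin r, ∑ i : Fin n, ‖(inner ℂ (g j) (e i) : ℂ)‖ ^ 2 := Finset.sum_comm
        _ = ∑ j : Fin r, ‖g j‖ ^ 2 := Finset.sum_congr rfl fun j _ => parseval e (g j)
        _ = ∑ j : Fin r, (1 : ℝ) := Finset.sum_congr rfl fun j _ => hnorm j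
        _ = r := by simp
    have hc0 : Λ ⟨0, by omega⟩ ≤ c := by
      have := hnonneg ⟨0, by omega⟩
      linarith
    have hbig := aux_sum hn Λ hmono hgap c hc0
    rw [htrace] at hbig
    have : (r : ℝ) < n := by exact_mod_cast hr
    linarith
end
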